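/- Let G be the complete m-uniform hypergraph on n vertices with n ≥ m+1 and m even. Then the equation B_G y = (m/2)·1 has no solution over Z_m; consequently G is not odd-colorable. -/

import Mathlib

lemma key_odd_color (m n : ℕ) (hm : 0 < m) (hme : Even m) (hn : m + 1 ≤ n) :
    ¬ ∃ f : Fin n → ZMod m, ∀ e ∈ Finset.powersetCard m (Finset.univ : Finset (Fin n)),
      ∑ v ∈ e, f v = ((m / 2 : ℕ) : ZMod m) := by
  rintro ⟨f, hf⟩
  have hn' : 0 < n := by omega
  -- f is constant
  have hconst : ∀ i j : Fin n, f i = f j := by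
    intro i j
    rcases eq_or_ne i j with rfl | hij
    · rfl
    · have hcard : m - 1 ≤ ((Finset.univ : Finset (Fin n)) \ {i, j}).card := by
        rw [Finset.card_sdiff_of_subset (by simp)]
        have : ({i, j} : Finset (Fin n)).card = 2 := by
          rw [Finset.card_insert_of_notMem (by simpa using hij), Finset.card_singleton]
        simp [this]
        omega
      obtain ⟨S, hS, hScard⟩ := Finset.exists_subset_card_eq hcard
      have hiS : i ∉ S := fun h => by
        have := hS h; simp at this
      have hjS : j ∉ S := fun h => by
        have := hS h; simp at this
      have he1 : insert i S ∈ Finset.powersetCard m (Finset.univ : Finset (Fin n)) := by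
        simp [Finset.mem_powersetCard, Finset.card_insert_of_notMem hiS, hScard]
        omega
      have he2 : insert j S ∈ Finset.powersetCard m (Finset.univ : Finset (Fin n)) := by
        simp [Finset.mem_powersetCard, Finset.card_insert_of_notMem hjS, hScard]
        omega
      have h1 := hf _ he1
      have h2 := hf _ he2
      rw [Finset.sum_insert hiS] at h1
      rw [Finset.sum_insert hjS] at h2
      have : f i + ∑ v ∈ S, f v = f j + ∑ v ∈ S, f v := h1.trans h2.symm
      exact add_right_cancel this
  -- pick an edge
  obtain ⟨e, he, hecard⟩ := Finset.exists_subset_card_eq (s := (Finset.univ : Finset (Fin n))) (n := m)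
    (by simp; omega)
  have heme : e ∈ Finset.powersetCard m (Finset.univ : Finset (Fin n)) := by
    simp [Finset.mem_powersetCard, hecard]
  have hsum := hf e heme
  have i0 : Fin n := ⟨0, hn'⟩
  have hsum' : ∑ v ∈ e, f v = (0 : ZMod m) := by
    calc ∑ v ∈ e, f v = ∑ _v ∈ e, f i0 := Finset.sum_congr rfl (fun v _ => hconst v i0)
    _ = (m : ZMod m) * f i0 := by rw [Finset.sum_const, hecard, nsmul_eq_mul]
    _ = 0 := by rw [ZMod.natCast_self, zero_mul]
  rw [hsum'] at hsum
  have hdvd : m ∣ m / 2 := (ZMod.natCast_eq_zero_iff _ _).mp hsum.symm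
  have h2 : 2 ≤ m := Nat.le_of_dvd hm hme.two_dvd
  have hpos : 0 < m / 2 := Nat.div_pos h2 (by norm_num)
  have := Nat.le_of_dvd hpos hdvd
  have := Nat.div_lt_self hm (by norm_num : 1 < 2)
  omega

/-- For the complete m-uniform hypergraph on `n ≥ m+1` vertices with `m`
even, the equation `B_G y = (m/2)·1` has no solution over `ZMod m`; consequently the
hypergraph is not odd-colorable. -/
theorem complete_hypergraph_not_odd_colorable
    (m n : ℕ) (hm : 0 < m) (hme : Even m) (hn : m + 1 ≤ n) :
    (¬ ∃ y : Fin n → ZMod m,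
      (Matrix.of
        (fun (e : {e // e ∈ Finset.powersetCard m (Finset.univ : Finset (Fin n))})
          (v : Fin n) => if v ∈ e.1 then (1 : ZMod m) else 0)).mulVec y
        = (fun _ => ((m / 2 : ℕ) : ZMod m))) ∧
    (¬ ∃ f : Fin n → ZMod m, ∀ e ∈ Finset.powersetCard m (Finset.univ : Finset (Fin n)),
      ∑ v ∈ e, f v = ((m / 2 : ℕ) : ZMod m)) := by
  have hkey := key_odd_color m n hm hme hn
  constructor
  · rintro ⟨y, hy⟩
    apply hkey
    refine ⟨y, fun e he => ?_⟩
    have := congrFun hy ⟨e, he⟩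
    simp only [Matrix.mulVec, dotProduct, Matrix.of_apply, ite_mul, one_mul,
      zero_mul] at this
    rwa [Finset.sum_ite_mem, Finset.univ_inter] at this
  · exact hkey
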